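/- Let u_n be defined by u_0 = 1, u_1 = 3, u_2 = 9 and u_{n+3} = 3u_{n+2} - 3u_n for n ≥ 0. Then u_n > 0 for all n and lim_{n→∞} u_n^{1/n} = 1/τ_2, where τ_2 ∈ (1/3, 1/2) is the smaller positive root of 3t³ - 3t + 1 = 0. -/

import Mathlib

set_option maxHeartbeats 2000000 in
/-- The hole counts u₀ = 1, u₁ = 3, u₂ = 9, u_{n+3} = 3u_{n+2} - 3u_n are
positive and grow at rate 1/τ₂, where τ₂ is the smaller positive root of
3t³ - 3t + 1. -/
theorem hole_growth (u : ℕ → ℝ)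
    (h0 : u 0 = 1) (h1 : u 1 = 3) (h2 : u 2 = 9)
    (hrec : ∀ n : ℕ, u (n + 3) = 3 * u (n + 2) - 3 * u n)
    (τ : ℝ) (hτ : τ ∈ Set.Ioo (1 / 3 : ℝ) (1 / 2))
    (hτr : 3 * τ ^ 3 - 3 * τ + 1 = 0)
    (hτmin : ∀ t : ℝ, 0 < t → 3 * t ^ 3 - 3 * t + 1 = 0 → τ ≤ t) :
    (∀ n, 0 < u n) ∧
    Filter.Tendsto (fun n : ℕ => (u n) ^ ((1 : ℝ) / n)) Filter.atTop (nhds (1 / τ)) := by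
  obtain ⟨hτl, hτu⟩ := hτ
  have hτ0 : 0 < τ := by linarith
  obtain ⟨L, hLdef⟩ : ∃ L : ℝ, L = 1 / τ := ⟨_, rfl⟩
  rw [← hLdef]
  have hL0 : 0 < L := by rw [hLdef]; positivity
  have hcube : L ^ 3 = 3 * L ^ 2 - 3 := by
    rw [hLdef]
    field_simp
    nlinarith [hτr, sq_nonneg τ]
  have hτ25 : τ < 2 / 5 := by
    by_contra h
    push_neg at h
    nlinarith [mul_nonneg (show (0:ℝ) ≤ τ - 2/5 by linarith)
      (show (0:ℝ) ≤ 21/25 - τ^2 - 2/5*τ by nlinarith)]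
  have hL25 : (5 / 2 : ℝ) ≤ L := by
    rw [hLdef, le_div_iff₀ hτ0]; linarith
  have hL3 : L ≤ 3 := by
    rw [hLdef, div_le_iff₀ hτ0]; linarith
  have hden : (0 : ℝ) < L ^ 2 - 3 := by nlinarith
  obtain ⟨a, hadef⟩ : ∃ a : ℝ, a = (L ^ 2 - 1) / (L ^ 2 - 3) := ⟨_, rfl⟩
  have ha_eq : a * (L ^ 2 - 3) = L ^ 2 - 1 := by
    rw [hadef]; field_simp
  have ha1 : (1 : ℝ) ≤ a := by
    rw [hadef, le_div_iff₀ hden]; linarith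
  have ha74 : a ≤ 7 / 4 := by
    rw [hadef, div_le_iff₀ hden]; nlinarith
  -- the key two-step recurrence for the error term e n = u n - a * L ^ n
  have base : u 2 - a * L ^ 2 = (3 - L) * (u 1 - a * L ^ 1) + (3 * L - L ^ 2) * (u 0 - a * L ^ 0) := by
    rw [h0, h1, h2]
    apply mul_left_cancel₀ (ne_of_gt hden)
    linear_combination (-3 * L * (L - 2)) * ha_eq + (-2 * L) * hcube
  have key : ∀ n, u (n + 2) - a * L ^ (n + 2) =
      (3 - L) * (u (n + 1) - a * L ^ (n + 1)) + (3 * L - L ^ 2) * (u n - a * L ^ n) := by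
    intro n
    induction n with
    | zero => simpa using base
    | succ n ih =>
      have h3 := hrec n
      linear_combination h3 + L * ih - u n * hcube
  have haL : a * L * (L ^ 2 - 3) = L ^ 3 - L := by linear_combination L * ha_eq
  -- error bound
  have ebound : ∀ n, |u n - a * L ^ n| ≤ (3 / 4) * (3 / 2) ^ n ∧
      |u (n + 1) - a * L ^ (n + 1)| ≤ (3 / 4) * (3 / 2) ^ (n + 1) := by
    intro n
    induction n with
    | zero =>
      constructor
      · rw [h0, pow_zero, mul_one, pow_zero, mul_one, abs_le]
        constructor <;> linarith
      · rw [h1, pow_one, abs_le]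
        have haL1 : a * L ≤ 33 / 8 := by nlinarith [haL, hcube, hden, hL25]
        have haL2 : (15 / 8 : ℝ) ≤ a * L := by nlinarith
        norm_num
        constructor <;> linarith
    | succ n ih =>
      obtain ⟨ih0, ih1⟩ := ih
      refine ⟨ih1, ?_⟩
      have hk := key n
      have hc1 : (0 : ℝ) ≤ 3 - L := by linarith
      have hc2 : (0 : ℝ) ≤ 3 * L - L ^ 2 := by nlinarith
      have hp : (0 : ℝ) < (3 / 2 : ℝ) ^ n := by positivity
      have e1 := abs_add_le ((3 - L) * (u (n + 1) - a * L ^ (n + 1)))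
        ((3 * L - L ^ 2) * (u n - a * L ^ n))
      rw [abs_mul, abs_mul, abs_of_nonneg hc1, abs_of_nonneg hc2] at e1
      have e2 : |u (n + 2) - a * L ^ (n + 2)| ≤
          (3 - L) * |u (n + 1) - a * L ^ (n + 1)| + (3 * L - L ^ 2) * |u n - a * L ^ n| := by
        rw [hk]; exact e1
      have hs1 : ((3 : ℝ) / 2) ^ (n + 1) = (3 / 2) ^ n * (3 / 2) := by ring
      have hs2 : ((3 : ℝ) / 2) ^ (n + 2) = (3 / 2) ^ (n + 1) * (3 / 2) := by ring
      have hq : (3 - L) * (3 / 2) + (3 * L - L ^ 2) ≤ 9 / 4 := by nlinarith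
      have hb1 := mul_le_mul_of_nonneg_left ih1 hc1
      have hb0 := mul_le_mul_of_nonneg_left ih0 hc2
      have hfin := mul_le_mul_of_nonneg_right hq hp.le
      show |u (n + 2) - a * L ^ (n + 2)| ≤ (3 / 4) * (3 / 2) ^ (n + 2)
      rw [hs2, hs1]
      rw [hs1] at hb1
      nlinarith [e2, hb1, hb0, hfin]
  -- two-sided bounds
  have hpow : ∀ n : ℕ, ((3 / 2 : ℝ)) ^ n ≤ L ^ n := fun n =>
    pow_le_pow_left₀ (by norm_num) (by linarith) n
  have hLn : ∀ n : ℕ, (0 : ℝ) < L ^ n := fun n => pow_pos hL0 n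
  have hlb : ∀ n, (1 / 4 : ℝ) * L ^ n ≤ u n := by
    intro n
    have h := (abs_le.1 (ebound n).1).1
    have h2 := hpow n
    nlinarith [hLn n]
  have hub : ∀ n, u n ≤ 3 * L ^ n := by
    intro n
    have h := (abs_le.1 (ebound n).1).2
    have h2 := hpow n
    nlinarith [hLn n, mul_le_mul_of_nonneg_right ha74 (hLn n).le]
  have hupos : ∀ n, 0 < u n := fun n => lt_of_lt_of_le (by positivity) (hlb n)
  refine ⟨hupos, ?_⟩
  -- the limit
  have h1n : Filter.Tendsto (fun n : ℕ => (1 : ℝ) / n) Filter.atTop (nhds 0) :=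
    tendsto_one_div_atTop_nhds_zero_nat
  have hcr : ∀ c : ℝ, 0 < c →
      Filter.Tendsto (fun n : ℕ => c ^ ((1 : ℝ) / n)) Filter.atTop (nhds 1) := by
    intro c hc
    have hcont : ContinuousAt (fun x : ℝ => c ^ x) 0 :=
      Real.continuousAt_const_rpow hc.ne'
    have := hcont.tendsto.comp h1n
    simpa [Real.rpow_zero, Function.comp_def] using this
  have hlow : Filter.Tendsto (fun n : ℕ => (1 / 4 : ℝ) ^ ((1 : ℝ) / n) * L)
      Filter.atTop (nhds L) := by
    simpa using (hcr (1/4) (by norm_num)).mul_const L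
  have hhigh : Filter.Tendsto (fun n : ℕ => (3 : ℝ) ^ ((1 : ℝ) / n) * L)
      Filter.atTop (nhds L) := by
    simpa using (hcr 3 (by norm_num)).mul_const L
  have key2 : ∀ n : ℕ, n ≠ 0 → ∀ c : ℝ, 0 < c →
      (c * L ^ n) ^ ((1 : ℝ) / n) = c ^ ((1 : ℝ) / n) * L := by
    intro n hn c hc
    rw [Real.mul_rpow hc.le (hLn n).le, ← Real.rpow_natCast L n,
      ← Real.rpow_mul hL0.le]
    congr 1
    rw [mul_one_div, div_self (Nat.cast_ne_zero.2 hn)]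
    exact Real.rpow_one L
  apply tendsto_of_tendsto_of_tendsto_of_le_of_le' hlow hhigh
  · filter_upwards [Filter.eventually_atTop.2 ⟨1, fun n hn => hn⟩] with n hn
    have hn0 : n ≠ 0 := Nat.one_le_iff_ne_zero.1 hn
    rw [← key2 n hn0 (1/4) (by norm_num)]
    exact Real.rpow_le_rpow (by positivity) (hlb n) (by positivity)
  · filter_upwards [Filter.eventually_atTop.2 ⟨1, fun n hn => hn⟩] with n hn
    have hn0 : n ≠ 0 := Nat.one_le_iff_ne_zero.1 hn
    rw [← key2 n hn0 3 (by norm_num)]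
    exact Real.rpow_le_rpow (hupos n).le (hub n) (by positivity)
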